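/- Let F, G : (Fin 3 → ℝ) → (Fin 3 → ℝ) be vector fields differentiable at a point x : Fin 3 → ℝ, and let n : Fin 3 → ℝ. Suppose F(y) = G(y) for every y with ∑ᵢ (yᵢ − xᵢ)·nᵢ = 0 (i.e., the fields agree on the affine plane through x with normal n). Then the normal component of the jump of the curl vanishes: ∑ᵢ ((curl F x)ᵢ − (curl G x)ᵢ)·nᵢ = 0. -/

import Mathlib

/-- Partial derivative of `f` at `x` in the `j`-th coordinate direction. -/
noncomputable def pderiv3 (f : (Fin 3 → ℝ) → ℝ) (j : Fin 3) (x : Fin 3 → ℝ) : ℝ :=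
  fderiv ℝ f x (Pi.single j 1)

/-- The curl of a vector field `F : ℝ³ → ℝ³` at a point `x`. -/
noncomputable def curl3 (F : (Fin 3 → ℝ) → (Fin 3 → ℝ)) (x : Fin 3 → ℝ) : Fin 3 → ℝ :=
  ![pderiv3 (fun y => F y 2) 1 x - pderiv3 (fun y => F y 1) 2 x,
    pderiv3 (fun y => F y 0) 2 x - pderiv3 (fun y => F y 2) 0 x,
    pderiv3 (fun y => F y 1) 0 x - pderiv3 (fun y => F y 0) 1 x]

lemma pderiv3_comp {F : (Fin 3 → ℝ) → (Fin 3 → ℝ)} {x : Fin 3 → ℝ}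
    (hF : DifferentiableAt ℝ F x) (k j : Fin 3) :
    pderiv3 (fun y => F y k) j x = fderiv ℝ F x (Pi.single j 1) k := by
  have h1 : HasFDerivAt (fun y => F y k)
      ((ContinuousLinearMap.proj k : (Fin 3 → ℝ) →L[ℝ] ℝ).comp (fderiv ℝ F x)) x :=
    (ContinuousLinearMap.proj k : (Fin 3 → ℝ) →L[ℝ] ℝ).hasFDerivAt.comp x hF.hasFDerivAt
  simp [pderiv3, h1.fderiv]

theorem curl_jump_normal_component_eq_zero
    (F G : (Fin 3 → ℝ) → (Fin 3 → ℝ)) (x n : Fin 3 → ℝ)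
    (hF : DifferentiableAt ℝ F x) (hG : DifferentiableAt ℝ G x)
    (h : ∀ y : Fin 3 → ℝ, ∑ i, (y i - x i) * n i = 0 → F y = G y) :
    ∑ i, (curl3 F x i - curl3 G x i) * n i = 0 := by
  have key : ∀ v : Fin 3 → ℝ, (∑ i, v i * n i) = 0 →
      fderiv ℝ F x v = fderiv ℝ G x v := by
    intro v hv
    have hline : (fun t : ℝ => F (x + t • v)) = (fun t : ℝ => G (x + t • v)) := by
      funext t
      apply h
      have e : ∀ i, (x + t • v) i - x i = t * v i := by intro i; simp
      simp only [e, mul_assoc, ← Finset.mul_sum, hv, mul_zero]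
    have hl : HasDerivAt (fun t : ℝ => x + t • v) v 0 := by
      simpa using ((hasDerivAt_id (0:ℝ)).smul_const v).const_add x
    have hFd : HasFDerivAt F (fderiv ℝ F x) (x + (0:ℝ) • v) := by
      simpa using hF.hasFDerivAt
    have hGd : HasFDerivAt G (fderiv ℝ G x) (x + (0:ℝ) • v) := by
      simpa using hG.hasFDerivAt
    have h1 : HasDerivAt (fun t : ℝ => F (x + t • v)) (fderiv ℝ F x v) 0 :=
      hFd.comp_hasDerivAt 0 hl
    have h2 : HasDerivAt (fun t : ℝ => G (x + t • v)) (fderiv ℝ G x v) 0 :=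
      hGd.comp_hasDerivAt 0 hl
    rw [hline] at h1
    exact h1.unique h2
  by_cases hn : (∑ i, n i * n i) = 0
  · have hn0 : ∀ i, n i = 0 := by
      intro i
      have := (Finset.sum_eq_zero_iff_of_nonneg (fun i _ => mul_self_nonneg (n i))).mp hn
        i (Finset.mem_univ i)
      nlinarith [this]
    simp [hn0]
  · set S := ∑ i, n i * n i with hS
    have hdec : ∀ j : Fin 3, fderiv ℝ F x (Pi.single j 1) - fderiv ℝ G x (Pi.single j 1)
        = (n j / S) • (fderiv ℝ F x n - fderiv ℝ G x n) := by
      intro j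
      set w : Fin 3 → ℝ := fun i => (Pi.single j (1:ℝ) : Fin 3 → ℝ) i - n j / S * n i with hwdef
      have hsingle : ∑ i, (Pi.single j (1:ℝ) : Fin 3 → ℝ) i * n i = n j := by
        rw [Finset.sum_eq_single j]
        · simp
        · intro b _ hb; simp [Pi.single_eq_of_ne hb]
        · simp
      have hw : (∑ i, w i * n i) = 0 := by
        have e : ∀ i, w i * n i
            = (Pi.single j (1:ℝ) : Fin 3 → ℝ) i * n i - n j / S * (n i * n i) := by
          intro i; simp [hwdef]; ring
        simp only [e, Finset.sum_sub_distrib, ← Finset.mul_sum, ← hS, hsingle]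
        field_simp
        ring
      have hkey := key _ hw
      have hsplit : (Pi.single j (1:ℝ) : Fin 3 → ℝ) = w + (n j / S) • n := by
        funext i; simp [hwdef]
      rw [hsplit, map_add, map_add, map_smul, map_smul, hkey]
      ext k
      simp
      ring
    have hcomp : ∀ k j : Fin 3,
        pderiv3 (fun y => F y k) j x - pderiv3 (fun y => G y k) j x
        = (n j / S) * (fderiv ℝ F x n k - fderiv ℝ G x n k) := by
      intro k j
      rw [pderiv3_comp hF, pderiv3_comp hG]
      have := congrFun (hdec j) k
      simpa using this
    simp only [Fin.sum_univ_three, curl3]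
    simp only [Matrix.cons_val_zero, Matrix.cons_val_one, Matrix.head_cons,
      Matrix.cons_val_two, Matrix.tail_cons]
    have e0 := hcomp 2 1
    have e1 := hcomp 1 2
    have e2 := hcomp 0 2
    have e3 := hcomp 2 0
    have e4 := hcomp 1 0
    have e5 := hcomp 0 1
    linear_combination n 0 * e0 - n 0 * e1 + n 1 * e2 - n 1 * e3 + n 2 * e4 - n 2 * e5
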